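/- For every n : ℕ, every pair of matrices A, X : Matrix (Fin n) (Fin n) ℂ and every k : ℕ, the complex derivative at 0 of the map t ↦ ((A + t • (X * A − A * X)).charpoly).coeff k equals 0; that is, every coefficient of the characteristic polynomial has vanishing directional derivative at A in any commutator direction [X, A]. -/
import Mathlib


open Matrix

set_option maxHeartbeats 1000000
set_option synthInstance.maxHeartbeats 400000

open Polynomial

variable {R S : Type*} [CommRing R] [CommRing S] {m : ℕ}

lemma charpoly_conj_aux (P Q M : Matrix (Fin m) (Fin m) R) (hPQ : P * Q = 1)
    (hQP : Q * P = 1) :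
    (P * M * Q).charpoly = M.charpoly := by
  have hcomm : ∀ N : Matrix (Fin m) (Fin m) R[X],
      Commute (Matrix.scalar (Fin m) (X : R[X])) N :=
    fun N => Matrix.scalar_commute _ (fun r => Commute.all _ _) N
  have h1 : charmatrix (P * M * Q) = P.map C * charmatrix M * Q.map C := by
    rw [charmatrix, charmatrix]
    simp only [mul_sub, sub_mul, RingHom.mapMatrix_apply]
    congr 1
    · rw [mul_assoc, (hcomm (Q.map C)).eq, ← mul_assoc, ← Matrix.map_mul, hPQ]
      simp
    · simp [Matrix.map_mul]
  rw [Matrix.charpoly, h1, det_mul, det_mul, mul_comm, ← mul_assoc, ← det_mul,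
    ← Matrix.map_mul, hQP]
  simp [Matrix.charpoly]

lemma snd_aeval_eps (q : R[X]) :
    (Polynomial.aeval (DualNumber.eps : DualNumber R) q).snd = q.coeff 1 := by
  rw [aeval_eq_sum_range]
  rw [TrivSqZeroExt.snd_sum]
  have hpow : ∀ i : ℕ, (TrivSqZeroExt.snd ((DualNumber.eps : DualNumber R) ^ i) : R)
      = if i = 1 then 1 else 0 := by
    intro i
    match i with
    | 0 => simp
    | 1 => simp
    | (j+2) =>
      have : (DualNumber.eps : DualNumber R) ^ (j+2) = 0 := by
        rw [pow_add, pow_two, DualNumber.eps_mul_eps, mul_zero]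
      simp [this]
  by_cases hk : 1 < q.natDegree + 1
  · rw [Finset.sum_eq_single 1]
    · simp [hpow]
    · intro b hb hb1
      rw [TrivSqZeroExt.snd_smul, hpow, if_neg hb1, smul_zero]
    · intro h; exact absurd (Finset.mem_range.mpr hk) h
  · have h0 : q.natDegree = 0 := by omega
    rw [h0, zero_add, Finset.sum_range_one, pow_zero, TrivSqZeroExt.snd_smul, TrivSqZeroExt.snd_one, smul_zero,
      Polynomial.coeff_eq_zero_of_natDegree_lt (by omega : q.natDegree < 1)]

/-- Every coefficient of the characteristic polynomial has
vanishing directional derivative at `A` in any commutator direction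
`[X, A] = X*A - A*X`. -/
theorem charpoly_coeff_deriv_commutator_eq_zero (n : ℕ)
    (A X : Matrix (Fin n) (Fin n) ℂ) (k : ℕ) :
    deriv (fun t : ℂ => ((A + t • (X * A - A * X)).charpoly).coeff k) 0 = 0 := by
  set B : Matrix (Fin n) (Fin n) ℂ := X * A - A * X with hB
  set M : Matrix (Fin n) (Fin n) ℂ[X] :=
    A.map C + (Polynomial.X : ℂ[X]) • B.map C with hM
  set p : ℂ[X] := (M.charpoly).coeff k with hp
  have hf : ∀ t : ℂ, ((A + t • B).charpoly).coeff k = p.eval t := by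
    intro t
    have hmap : M.map (evalRingHom t) = A + t • B := by
      ext i j
      show Polynomial.eval t (M i j) = A i j + t * B i j
      rw [hM, Matrix.add_apply, Matrix.smul_apply, Matrix.map_apply, Matrix.map_apply,
        smul_eq_mul, Polynomial.eval_add, Polynomial.eval_C, Polynomial.eval_mul,
        Polynomial.eval_X, Polynomial.eval_C, mul_comm t (B i j)]
    rw [← hmap, Matrix.charpoly_map, Polynomial.coeff_map, Polynomial.coe_evalRingHom]
  have hfun : (fun t : ℂ => ((A + t • B).charpoly).coeff k) = fun t => p.eval t :=
    funext hf
  rw [hfun, Polynomial.deriv]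
  have h1 : p.derivative.eval 0 = p.coeff 1 := by
    rw [← Polynomial.coeff_zero_eq_eval_zero, Polynomial.coeff_derivative]
    simp
  set e : DualNumber ℂ := DualNumber.eps with he'
  set ι : ℂ →+* DualNumber ℂ := algebraMap ℂ (DualNumber ℂ) with hι
  set A' := A.map ι with hA'
  set X' := X.map ι with hX'
  have he : e * e = 0 := DualNumber.eps_mul_eps
  have hMφ : M.map (Polynomial.aeval e : ℂ[X] →ₐ[ℂ] DualNumber ℂ).toRingHom
      = A' + e • (X' * A' - A' * X') := by
    have hB' : B.map ι = X' * A' - A' * X' := by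
      rw [hB, Matrix.map_sub _ ι.map_sub, Matrix.map_mul, Matrix.map_mul]
    rw [← hB']
    refine Matrix.ext fun i j => ?_
    show Polynomial.aeval e (M i j) = (A' + e • B.map ⇑ι) i j
    simp only [hM, Matrix.add_apply, Matrix.smul_apply, Matrix.map_apply, smul_eq_mul,
      map_add, _root_.map_mul, Polynomial.aeval_X, Polynomial.aeval_C]
    rfl
  have hPQ : (1 + e • X') * (1 - e • X') = 1 := by
    simp only [mul_sub, add_mul, one_mul, mul_one, smul_mul_assoc, mul_smul_comm,
      smul_add, smul_sub, smul_smul, he, zero_smul, sub_zero]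
    abel
  have hQP : (1 - e • X') * (1 + e • X') = 1 := by
    simp only [mul_add, sub_mul, one_mul, mul_one, smul_mul_assoc, mul_smul_comm,
      smul_add, smul_sub, smul_smul, he, zero_smul, add_zero, sub_zero]
    abel
  have hconj : (1 + e • X') * A' * (1 - e • X') = A' + e • (X' * A' - A' * X') := by
    simp only [mul_sub, add_mul, sub_mul, one_mul, mul_one, smul_mul_assoc,
      mul_smul_comm, smul_add, smul_sub, smul_smul, he, zero_smul, sub_zero,
      add_zero, smul_zero, mul_assoc]
    abel
  have key : (Polynomial.aeval e : ℂ[X] →ₐ[ℂ] DualNumber ℂ) p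
      = ι (A.charpoly.coeff k) := by
    have h2 : (Polynomial.aeval e : ℂ[X] →ₐ[ℂ] DualNumber ℂ) p
        = ((M.map (Polynomial.aeval e : ℂ[X] →ₐ[ℂ] DualNumber ℂ).toRingHom).charpoly).coeff k := by
      rw [Matrix.charpoly_map, Polynomial.coeff_map]
      rfl
    rw [h2, hMφ, ← hconj, charpoly_conj_aux _ _ _ hPQ hQP, hA', Matrix.charpoly_map,
      Polynomial.coeff_map]
  rw [h1, ← snd_aeval_eps p, ← he']
  have h3 : TrivSqZeroExt.snd ((Polynomial.aeval e : ℂ[X] →ₐ[ℂ] DualNumber ℂ) p) = 0 := by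
    rw [key, hι]
    simp [TrivSqZeroExt.algebraMap_eq_inl, TrivSqZeroExt.snd_inl]
  exact h3
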